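/- The second group cohomology of ℤ×ℤ with trivial coefficients in ℤ/2 is isomorphic to ℤ/2, i.e., the quotient of (abelian-valued) 2-cocycles on ℤ×ℤ valued in ℤ/2 by coboundaries is a group of order 2. -/

import Mathlib

/-- Signed partial sum: `Fint f n` satisfies `Fint f 0 = 0` and `Fint f (n+1) = Fint f n + f n`. -/
private noncomputable def Fint (f : ℤ → ZMod 2) (n : ℤ) : ZMod 2 :=
  (∑ k ∈ Finset.Ico (0:ℤ) n, f k) - ∑ k ∈ Finset.Ico n (0:ℤ), f k

private lemma Fint_zero (f : ℤ → ZMod 2) : Fint f 0 = 0 := by simp [Fint]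

private lemma Fint_succ (f : ℤ → ZMod 2) (n : ℤ) : Fint f (n + 1) = Fint f n + f n := by
  rcases le_or_gt 0 n with h | h
  · have h1 : Finset.Ico (n+1) (0:ℤ) = ∅ := Finset.Ico_eq_empty (by omega)
    have h2 : Finset.Ico n (0:ℤ) = ∅ := Finset.Ico_eq_empty (by omega)
    have h3 : Finset.Ico (0:ℤ) (n+1) = insert n (Finset.Ico (0:ℤ) n) := by
      ext k; simp only [Finset.mem_Ico, Finset.mem_insert]; omega
    have h4 : n ∉ Finset.Ico (0:ℤ) n := by simp
    simp [Fint, h1, h2, h3, Finset.sum_insert h4]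
    ring
  · have h1 : Finset.Ico (0:ℤ) (n+1) = ∅ := Finset.Ico_eq_empty (by omega)
    have h2 : Finset.Ico (0:ℤ) n = ∅ := Finset.Ico_eq_empty (by omega)
    have h3 : Finset.Ico n (0:ℤ) = insert n (Finset.Ico (n+1) (0:ℤ)) := by
      ext k; simp only [Finset.mem_Ico, Finset.mem_insert]; omega
    have h4 : n ∉ Finset.Ico (n+1) (0:ℤ) := by simp
    simp [Fint, h1, h2, h3, Finset.sum_insert h4]
    rw [add_assoc, CharTwo.add_self_eq_zero, add_zero]



/-- The additive group of 2-cocycles on ℤ×ℤ with values in ℤ/2 (trivial action). -/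
def cocycles : AddSubgroup (((ℤ × ℤ) × (ℤ × ℤ)) → ZMod 2) where
  carrier := {α | ∀ a b c : ℤ × ℤ, α (a + b, c) + α (a, b) = α (b, c) + α (a, b + c)}
  add_mem' := by
    intro α β hα hβ a b c
    have h1 := hα a b c
    have h2 := hβ a b c
    simp only [Pi.add_apply]
    linear_combination h1 + h2
  zero_mem' := by intro a b c; simp
  neg_mem' := by
    intro α hα a b c
    have h1 := hα a b c
    simp only [Pi.neg_apply]
    linear_combination -h1

/-- The additive group of 2-coboundaries on ℤ×ℤ with values in ℤ/2. -/
def coboundaries : AddSubgroup (((ℤ × ℤ) × (ℤ × ℤ)) → ZMod 2) where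
  carrier := {α | ∃ β : ℤ × ℤ → ZMod 2, ∀ a b : ℤ × ℤ, α (a, b) = β a + β b - β (a + b)}
  add_mem' := by
    rintro α γ ⟨β₁, h₁⟩ ⟨β₂, h₂⟩
    refine ⟨β₁ + β₂, fun a b => ?_⟩
    simp only [Pi.add_apply, h₁ a b, h₂ a b]
    ring
  zero_mem' := ⟨0, by intro a b; simp⟩
  neg_mem' := by
    rintro α ⟨β, h⟩
    refine ⟨-β, fun a b => ?_⟩
    simp only [Pi.neg_apply, h a b]
    ring


private lemma Fint_sub_one (f : ℤ → ZMod 2) (n : ℤ) : Fint f (n - 1) = Fint f n - f (n - 1) := by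
  have h := Fint_succ f (n - 1)
  rw [show n - 1 + 1 = n by ring] at h
  rw [h]; ring

private lemma symm_mem_coboundaries (α : ((ℤ × ℤ) × (ℤ × ℤ)) → ZMod 2)
    (hα : ∀ a b c : ℤ × ℤ, α (a + b, c) + α (a, b) = α (b, c) + α (a, b + c))
    (hsym : α ((1,0),(0,1)) = α ((0,1),(1,0))) : α ∈ coboundaries := by
  -- values on (a, 0) are constant
  have hz0 : ∀ a : ℤ × ℤ, α (a, 0) = α (0, 0) := by
    intro a
    have h := hα a 0 0
    simp only [add_zero] at h
    exact add_right_cancel h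
  -- the commuting square identity
  have hsq : ∀ m n : ℤ, α ((m,n),(1,0)) + α ((m+1,n),(0,1))
      = α ((m,n),(0,1)) + α ((m,n+1),(1,0)) := by
    intro m n
    have h1 := hα (m,n) (1,0) (0,1)
    have h2 := hα (m,n) (0,1) (1,0)
    have e1 : ((m,n) : ℤ × ℤ) + (1,0) = (m+1,n) := by simp
    have e2 : ((m,n) : ℤ × ℤ) + (0,1) = (m,n+1) := by simp
    have e3 : ((1,0) : ℤ × ℤ) + (0,1) = (1,1) := by simp
    have e4 : ((0,1) : ℤ × ℤ) + (1,0) = (1,1) := by simp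
    rw [e1, e3] at h1
    rw [e2, e4] at h2
    linear_combination h1 - h2 + hsym
  -- construct the primitive β
  obtain ⟨β, hβ1, hβ2, hβ0⟩ :
      ∃ β : ℤ × ℤ → ZMod 2,
        (∀ m n : ℤ, β (m+1, n) = β (m, n) - α ((m,n),(1,0))) ∧
        (∀ m n : ℤ, β (m, n+1) = β (m, n) - α ((m,n),(0,1))) ∧
        β (0, 0) = α (0, 0) := by
    have hGdiff : ∀ (n m : ℤ), Fint (fun j => α ((m+1, j),(0,1))) n
        - Fint (fun j => α ((m, j),(0,1))) n = α ((m,n),(1,0)) - α ((m,0),(1,0)) := by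
      intro n
      induction n using Int.induction_on with
      | zero => intro m; simp [Fint_zero]
      | succ i ih =>
        intro m
        have h1 : Fint (fun j => α ((m+1, j),(0,1))) ((i:ℤ)+1)
            = Fint (fun j => α ((m+1, j),(0,1))) (i:ℤ) + α ((m+1,(i:ℤ)),(0,1)) :=
          Fint_succ _ _
        have h2 : Fint (fun j => α ((m, j),(0,1))) ((i:ℤ)+1)
            = Fint (fun j => α ((m, j),(0,1))) (i:ℤ) + α ((m,(i:ℤ)),(0,1)) :=
          Fint_succ _ _
        have hs := hsq m (i:ℤ)
        linear_combination ih m + h1 - h2 + hs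
      | pred i ih =>
        intro m
        have h1 : Fint (fun j => α ((m+1, j),(0,1))) (-(i:ℤ)-1)
            = Fint (fun j => α ((m+1, j),(0,1))) (-(i:ℤ)) - α ((m+1,-(i:ℤ)-1),(0,1)) :=
          Fint_sub_one _ _
        have h2 : Fint (fun j => α ((m, j),(0,1))) (-(i:ℤ)-1)
            = Fint (fun j => α ((m, j),(0,1))) (-(i:ℤ)) - α ((m,-(i:ℤ)-1),(0,1)) :=
          Fint_sub_one _ _
        have hs := hsq m (-(i:ℤ)-1)
        rw [show -(i:ℤ)-1+1 = -(i:ℤ) by ring] at hs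
        linear_combination ih m + h1 - h2 - hs
    refine ⟨fun x => (α (0,0) - Fint (fun j => α ((j,0),(1,0))) x.1)
        - Fint (fun j => α ((x.1, j),(0,1))) x.2, ?_, ?_, ?_⟩
    · intro m n
      dsimp only
      have hf : Fint (fun j => α ((j,0),(1,0))) (m+1)
          = Fint (fun j => α ((j,0),(1,0))) m + α ((m,0),(1,0)) := Fint_succ _ _
      linear_combination -hf - hGdiff n m
    · intro m n
      dsimp only
      have hf : Fint (fun j => α ((m, j),(0,1))) (n+1)
          = Fint (fun j => α ((m, j),(0,1))) n + α ((m,n),(0,1)) := Fint_succ _ _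
      linear_combination -hf
    · dsimp only
      simp [Fint_zero]
  refine ⟨β, ?_⟩
  -- translate the recursions into vector form
  have hB1 : ∀ x : ℤ × ℤ, β (x + (1,0)) = β x - α (x,(1,0)) := by
    rintro ⟨m, n⟩
    have e : ((m,n) : ℤ × ℤ) + (1,0) = (m+1,n) := by simp
    rw [e]; exact hβ1 m n
  have hB2 : ∀ x : ℤ × ℤ, β (x + (0,1)) = β x - α (x,(0,1)) := by
    rintro ⟨m, n⟩
    have e : ((m,n) : ℤ × ℤ) + (0,1) = (m,n+1) := by simp
    rw [e]; exact hβ2 m n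
  -- the induction step, valid for any direction e satisfying the recursion
  have key : ∀ (e : ℤ × ℤ), (∀ x, β (x + e) = β x - α (x, e)) →
      ∀ a b : ℤ × ℤ, α (a, b) = β a + β b - β (a + b) →
        (α (a, b + e) = β a + β (b + e) - β (a + (b + e))) ∧
        (α (a, b - e) = β a + β (b - e) - β (a + (b - e))) := by
    intro e he a b hab
    constructor
    · have h := hα a b e
      rw [he b, show a + (b + e) = (a + b) + e by ring, he (a+b)]
      linear_combination hab - h
    · have hbe : b - e + e = b := by ring
      have h := hα a (b - e) e
      rw [hbe] at h
      have hb : β b = β (b - e) - α (b - e, e) := by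
        have := he (b - e); rw [hbe] at this; exact this
      have hab2 : β (a + b) = β (a + (b - e)) - α (a + (b - e), e) := by
        have := he (a + (b - e))
        rw [show a + (b - e) + e = a + b by ring] at this
        exact this
      linear_combination hab + h + hb - hab2
  have axis : ∀ (a : ℤ × ℤ) (m : ℤ), α (a, (m,0)) = β a + β (m,0) - β (a + (m,0)) := by
    intro a m
    induction m using Int.induction_on with
    | zero =>
      have hβ0' : β (0 : ℤ × ℤ) = α (0, 0) := hβ0
      rw [show ((0:ℤ),(0:ℤ)) = (0 : ℤ × ℤ) from rfl, add_zero, hβ0', hz0 a]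
      ring
    | succ i ih =>
      have h := (key (1,0) hB1 a ((i:ℤ),0) ih).1
      rwa [show (((i:ℤ),(0:ℤ)) : ℤ × ℤ) + (1,0) = ((i:ℤ)+1, (0:ℤ)) by simp] at h
    | pred i ih =>
      have h := (key (1,0) hB1 a (-(i:ℤ),0) ih).2
      rwa [show ((-(i:ℤ),(0:ℤ)) : ℤ × ℤ) - (1,0) = (-(i:ℤ)-1, (0:ℤ)) by simp] at h
  rintro a ⟨m, n⟩
  induction n using Int.induction_on with
  | zero => exact axis a m
  | succ i ih =>
    have h := (key (0,1) hB2 a (m,(i:ℤ)) ih).1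
    rwa [show ((m,(i:ℤ)) : ℤ × ℤ) + (0,1) = (m, (i:ℤ)+1) by simp] at h
  | pred i ih =>
    have h := (key (0,1) hB2 a (m,-(i:ℤ)) ih).2
    rwa [show ((m,-(i:ℤ)) : ℤ × ℤ) - (0,1) = (m, -(i:ℤ)-1) by simp] at h

/-- H²(ℤ×ℤ; ℤ/2) ≅ ℤ/2: the quotient of 2-cocycles by 2-coboundaries is ℤ/2. -/
theorem stmt_3 :
    Nonempty ((cocycles ⧸ (coboundaries.addSubgroupOf cocycles)) ≃+ ZMod 2) := by
  let φ : cocycles →+ ZMod 2 :=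
    { toFun := fun x => x.1 ((1,0),(0,1)) + x.1 ((0,1),(1,0))
      map_zero' := by simp
      map_add' := by
        intro x y
        simp only [AddSubgroup.coe_add, Pi.add_apply]
        ring }
  have hker : coboundaries.addSubgroupOf cocycles = φ.ker := by
    ext x
    simp only [AddSubgroup.mem_addSubgroupOf, AddMonoidHom.mem_ker]
    constructor
    · rintro ⟨γ, hγ⟩
      show (x : ((ℤ × ℤ) × (ℤ × ℤ)) → ZMod 2) ((1,0),(0,1))
          + (x : ((ℤ × ℤ) × (ℤ × ℤ)) → ZMod 2) ((0,1),(1,0)) = 0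
      rw [hγ (1,0) (0,1), hγ (0,1) (1,0),
        show ((1,0) : ℤ × ℤ) + (0,1) = (1,1) by simp,
        show ((0,1) : ℤ × ℤ) + (1,0) = (1,1) by simp]
      have h2 : (2 : ZMod 2) = 0 := rfl
      linear_combination (γ (1,0) + γ (0,1) - γ (1,1)) * h2
    · intro hx
      have hco : ∀ a b c : ℤ × ℤ, (x : ((ℤ × ℤ) × (ℤ × ℤ)) → ZMod 2) (a + b, c)
          + (x : ((ℤ × ℤ) × (ℤ × ℤ)) → ZMod 2) (a, b)
          = (x : ((ℤ × ℤ) × (ℤ × ℤ)) → ZMod 2) (b, c)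
          + (x : ((ℤ × ℤ) × (ℤ × ℤ)) → ZMod 2) (a, b + c) := x.2
      have hx' : (x : ((ℤ × ℤ) × (ℤ × ℤ)) → ZMod 2) ((1,0),(0,1))
          + (x : ((ℤ × ℤ) × (ℤ × ℤ)) → ZMod 2) ((0,1),(1,0)) = 0 := hx
      have hsym : (x : ((ℤ × ℤ) × (ℤ × ℤ)) → ZMod 2) ((1,0),(0,1))
          = (x : ((ℤ × ℤ) × (ℤ × ℤ)) → ZMod 2) ((0,1),(1,0)) :=
        (eq_neg_of_add_eq_zero_left hx').trans (CharTwo.neg_eq _)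
      exact symm_mem_coboundaries _ hco hsym
  have hmem : (fun p : (ℤ × ℤ) × (ℤ × ℤ) => ((p.1.2 * p.2.1 : ℤ) : ZMod 2)) ∈ cocycles := by
    intro a b c
    simp only [Prod.fst_add, Prod.snd_add]
    push_cast
    ring
  have hsurj : Function.Surjective φ := by
    intro y
    have hall : ∀ z : ZMod 2, z = 0 ∨ z = 1 := by decide
    rcases hall y with rfl | rfl
    · exact ⟨0, map_zero φ⟩
    · refine ⟨⟨_, hmem⟩, ?_⟩
      show (((0 * 0 : ℤ) : ZMod 2)) + (((1 * 1 : ℤ) : ZMod 2)) = 1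
      norm_num
  exact ⟨(QuotientAddGroup.quotientAddEquivOfEq hker).trans
    (QuotientAddGroup.quotientKerEquivOfSurjective φ hsurj)⟩
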